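/- Let 0 < α ≤ 1, 0 < ρ ≤ 1, β > 0, γ ≥ 0 and λ, μ > 0. Then for every w > 0 such that β < w^α and |λ − μ| < w^ρ (1 − β w^{-α})^{γ}, one has ∫_0^∞ e^{-wt} Σ_{k=0}^∞ (λ−μ)^k t^{kρ} E_{α,kρ+1}^{kγ}(-β t^α) dt = w^{ρ-1}(1 + β w^{-α})^{γ} / ( w^{ρ}(1 + β w^{-α})^{γ} − (λ − μ) ), the series converging absolutely and being integrable term by term. -/

import Mathlib

open MeasureTheory Real
open Set Filter
open scoped ENNReal NNReal
set_option maxHeartbeats 1000000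

/-- Pochhammer symbol `(g)_k = g (g+1) ⋯ (g+k-1)`. -/
noncomputable def poch (g : ℝ) (k : ℕ) : ℝ := ∏ i ∈ Finset.range k, (g + i)

/-- Three-parameter (Prabhakar) Mittag-Leffler function. -/
noncomputable def ml3 (a b g x : ℝ) : ℝ :=
  ∑' k : ℕ, poch g k * x ^ k / (Real.Gamma ((k : ℝ) * a + b) * (Nat.factorial k : ℝ))

/-- The `k`-th term of the series giving the mean of the GFLBDP. -/
noncomputable def meanTerm (α ρ β γ lam mu : ℝ) (k : ℕ) (t : ℝ) : ℝ :=
  (lam - mu) ^ k * t ^ ((k : ℝ) * ρ) * ml3 α ((k : ℝ) * ρ + 1) ((k : ℝ) * γ) (-β * t ^ α)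

lemma poch_zero (g : ℝ) : poch g 0 = 1 := by simp [poch]

lemma poch_succ (g : ℝ) (j : ℕ) : poch g (j+1) = poch g j * (g + j) :=
  Finset.prod_range_succ _ _

lemma poch_nonneg {g : ℝ} (hg : 0 ≤ g) (j : ℕ) : 0 ≤ poch g j :=
  Finset.prod_nonneg fun i _ => by positivity

lemma poch_pos {g : ℝ} (hg : 0 < g) (j : ℕ) : 0 < poch g j :=
  Finset.prod_pos fun i _ => by positivity

lemma poch_zero_left {j : ℕ} (hj : j ≠ 0) : poch 0 j = 0 :=
  Finset.prod_eq_zero (Finset.mem_range.2 (Nat.pos_of_ne_zero hj)) (by simp)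

lemma Gamma_poch {g : ℝ} (hg : 0 < g) (j : ℕ) :
    Real.Gamma (g + j) = poch g j * Real.Gamma g := by
  induction j with
  | zero => simp [poch_zero]
  | succ n ih =>
      have h1 : g + (n+1 : ℕ) = (g + n) + 1 := by push_cast; ring
      rw [h1, Real.Gamma_add_one (by positivity), ih, poch_succ]; ring

/-- Key Gamma lower bound: `x ^ s * exp (-x) ≤ Γ (s+1)`. -/
lemma rpow_mul_exp_neg_le_Gamma {s x : ℝ} (hs : 0 ≤ s) (hx : 0 < x) :
    x ^ s * Real.exp (-x) ≤ Real.Gamma (s + 1) := by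
  have hG : Real.Gamma (s + 1) = ∫ u in Ioi (0:ℝ), Real.exp (-u) * u ^ s := by
    rw [Real.Gamma_eq_integral (by linarith)]; simp
  have hint : IntegrableOn (fun u : ℝ => Real.exp (-u) * u ^ s) (Ioi 0) := by
    have := Real.GammaIntegral_convergent (by linarith : (0:ℝ) < s + 1)
    simpa using this
  have h1 : ∫ u in Ioi x, Real.exp (-u) * x ^ s ≤ ∫ u in Ioi x, Real.exp (-u) * u ^ s := by
    refine setIntegral_mono_on ?_ ?_ measurableSet_Ioi ?_
    · exact ((exp_neg_integrableOn_Ioi x one_pos).congr_fun (by intro u hu; simp)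
        measurableSet_Ioi).mul_const _
    · exact hint.mono_set (Ioi_subset_Ioi hx.le)
    · intro u hu
      have : x ^ s ≤ u ^ s := Real.rpow_le_rpow hx.le (le_of_lt hu) hs
      nlinarith [Real.exp_pos (-u)]
  have h2 : ∫ u in Ioi x, Real.exp (-u) * u ^ s ≤ ∫ u in Ioi (0:ℝ), Real.exp (-u) * u ^ s := by
    refine setIntegral_mono_set hint ?_ ?_
    · filter_upwards [ae_restrict_mem measurableSet_Ioi] with u hu
      have := le_of_lt (mem_Ioi.1 hu)
      positivity
    · exact HasSubset.Subset.eventuallyLE (Ioi_subset_Ioi hx.le)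
  have h3 : ∫ u in Ioi x, Real.exp (-u) * x ^ s = x ^ s * Real.exp (-x) := by
    rw [integral_mul_const, integral_exp_neg_Ioi]; ring
  rw [hG]; rw [h3] at h1; linarith

lemma rpow_le_Gamma_mul_exp {s x : ℝ} (hs : 0 ≤ s) (hx : 0 < x) :
    x ^ s ≤ Real.Gamma (s + 1) * Real.exp x := by
  have h := rpow_mul_exp_neg_le_Gamma hs hx
  have he := Real.exp_pos x
  have : Real.exp (-x) * Real.exp x = 1 := by rw [← Real.exp_add]; simp
  nlinarith [Real.rpow_nonneg hx.le s, Real.exp_pos (-x)]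

/-- value of the Laplace integral of a monomial -/
lemma laplace_rpow {s w : ℝ} (hs : 0 ≤ s) (hw : 0 < w) :
    ∫ t in Ioi (0:ℝ), Real.exp (-(w * t)) * t ^ s
      = Real.Gamma (s + 1) * w ^ (-s - 1) := by
  have h := integral_rpow_mul_exp_neg_mul_Ioi (by linarith : (0:ℝ) < s + 1) hw
  have h2 : ∫ t in Ioi (0:ℝ), Real.exp (-(w * t)) * t ^ s
      = ∫ t in Ioi (0:ℝ), t ^ (s + 1 - 1) * Real.exp (-(w * t)) := by
    refine setIntegral_congr_fun measurableSet_Ioi fun t ht => ?_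
    simp [mul_comm]
  rw [h2, h, one_div, ← Real.rpow_neg_one w, ← Real.rpow_mul hw.le]
  rw [show (-1:ℝ) * (s+1) = -s-1 by ring]
  ring

lemma laplace_integrable {s w : ℝ} (hs : 0 ≤ s) (hw : 0 < w) :
    IntegrableOn (fun t : ℝ => Real.exp (-(w * t)) * t ^ s) (Ioi 0) := by
  have hw2 : (0:ℝ) < w / 2 := by linarith
  set C : ℝ := Real.Gamma (s + 1) * (w/2) ^ (-s) with hC
  have hmeas : Measurable fun t : ℝ => Real.exp (-(w * t)) * t ^ s :=
    ((measurable_id.const_mul w).neg.exp).mul (Real.continuous_rpow_const hs).measurable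
  refine Integrable.mono' (g := fun t => C * Real.exp (-(w/2) * t)) ?_ 
    hmeas.aestronglyMeasurable ?_
  · exact (exp_neg_integrableOn_Ioi 0 hw2).const_mul C
  · filter_upwards [ae_restrict_mem measurableSet_Ioi] with t ht
    have ht0 : (0:ℝ) < t := ht
    have hb : ((w/2) * t) ^ s ≤ Real.Gamma (s+1) * Real.exp ((w/2)*t) :=
      rpow_le_Gamma_mul_exp hs (by positivity)
    have hsplit : ((w/2) * t) ^ s = (w/2) ^ s * t ^ s := Real.mul_rpow hw2.le ht0.le
    have hts : t ^ s ≤ Real.Gamma (s+1) * Real.exp ((w/2)*t) * (w/2) ^ (-s) := by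
      rw [Real.rpow_neg hw2.le]
      rw [hsplit] at hb
      have h2 : (0:ℝ) < (w/2) ^ s := Real.rpow_pos_of_pos hw2 s
      rw [mul_comm ((w/2)^s) (t^s)] at hb
      calc t ^ s = t ^ s * (w/2)^s * ((w/2)^s)⁻¹ := by field_simp
        _ ≤ Real.Gamma (s+1) * Real.exp ((w/2)*t) * ((w/2)^s)⁻¹ := by
            apply mul_le_mul_of_nonneg_right hb (by positivity)
    have hnorm : ‖Real.exp (-(w * t)) * t ^ s‖ = Real.exp (-(w*t)) * t ^ s := by
      rw [Real.norm_eq_abs, abs_of_nonneg]; positivity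
    rw [hnorm]
    calc Real.exp (-(w*t)) * t ^ s 
        ≤ Real.exp (-(w*t)) * (Real.Gamma (s+1) * Real.exp ((w/2)*t) * (w/2)^(-s)) :=
          mul_le_mul_of_nonneg_left hts (Real.exp_pos _).le
      _ = C * (Real.exp (-(w*t)) * Real.exp ((w/2)*t)) := by ring
      _ = C * Real.exp (-(w/2) * t) := by rw [← Real.exp_add]; ring_nf

lemma exp_tsum (y : ℝ) : (∑' n : ℕ, y ^ n / n.factorial) = Real.exp y := by
  rw [Real.exp_eq_exp_ℝ, NormedSpace.exp_eq_tsum_div]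

/-- Generalized binomial series `∑ (g)_j x^j / j! = (1-x)^(-g)`. -/
lemma hasSum_poch {g x : ℝ} (hg : 0 ≤ g) (hx : |x| < 1) :
    HasSum (fun j : ℕ => poch g j * x ^ j / (j.factorial : ℝ)) ((1 - x) ^ (-g)) := by
  have h1x : (0:ℝ) < 1 - x := by cases' abs_lt.1 hx with h1 h2; linarith
  rcases eq_or_lt_of_le hg with hg0 | hgpos
  · -- g = 0
    have h : ∀ j : ℕ, j ≠ 0 → poch g j * x ^ j / (j.factorial : ℝ) = 0 := by
      intro j hj; rw [← hg0, poch_zero_left hj]; simp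
    have h0 : poch g 0 * x ^ 0 / ((0:ℕ).factorial : ℝ) = 1 := by simp [poch_zero]
    have : (1 - x) ^ (-g) = 1 := by rw [← hg0, neg_zero, Real.rpow_zero]
    rw [this, ← h0]
    exact hasSum_single 0 h
  rcases eq_or_ne x 0 with hx0 | hx0
  · subst hx0
    have h : ∀ j : ℕ, j ≠ 0 → poch g j * (0:ℝ) ^ j / (j.factorial : ℝ) = 0 := by
      intro j hj; simp [zero_pow hj]
    have h0 : poch g 0 * (0:ℝ) ^ 0 / ((0:ℕ).factorial : ℝ) = 1 := by simp [poch_zero]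
    have hv : ((1:ℝ) - 0) ^ (-g) = 1 := by rw [sub_zero, Real.one_rpow]
    rw [hv, ← h0]
    exact hasSum_single 0 h
  -- main case: 0 < g, x ≠ 0, |x| < 1
  have habs : Summable fun j : ℕ => poch g j * |x| ^ j / (j.factorial : ℝ) := by
    apply summable_of_ratio_test_tendsto_lt_one hx
    · exact Filter.Eventually.of_forall fun j => by
        have h1 := poch_pos hgpos j
        have h2 := pow_pos (abs_pos.2 hx0) j
        have h3 := Nat.factorial_pos j
        positivity
    · have heq : ∀ j : ℕ, ‖poch g (j+1) * |x| ^ (j+1) / ((j+1).factorial : ℝ)‖ /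
          ‖poch g j * |x| ^ j / (j.factorial : ℝ)‖
          = |x| * (1 + (g - 1) * (1 / ((j:ℝ) + 1))) := by
        intro j
        have hp := poch_pos hgpos j
        have hxp := pow_pos (abs_pos.2 hx0) j
        have hf : (0:ℝ) < (j.factorial : ℝ) := by exact_mod_cast Nat.factorial_pos j
        have hj1 : (0:ℝ) < (j:ℝ) + 1 := by positivity
        have hgj0 : (0:ℝ) < g + j := by positivity
        have hdiv : poch g (j+1) * |x| ^ (j+1) / ((j+1).factorial : ℝ) /
            (poch g j * |x| ^ j / (j.factorial : ℝ))
            = |x| * (1 + (g - 1) * (1 / ((j:ℝ) + 1))) := by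
          rw [poch_succ, pow_succ, Nat.factorial_succ, Nat.cast_mul]
          push_cast
          field_simp
          ring
        rw [Real.norm_eq_abs, Real.norm_eq_abs, ← abs_div, hdiv, abs_of_nonneg]
        have : (0:ℝ) < 1 + (g - 1) * (1 / ((j:ℝ) + 1)) := by
          have h5 : 1 + (g - 1) * (1 / ((j:ℝ) + 1)) = (g + j) / ((j:ℝ)+1) := by
            field_simp; ring
          rw [h5]; positivity
        positivity
      rw [funext heq]
      have h2 : Filter.Tendsto (fun j : ℕ => |x| * (1 + (g - 1) * (1 / ((j:ℝ) + 1))))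
          Filter.atTop (nhds (|x| * (1 + (g-1) * 0))) :=
        tendsto_const_nhds.mul (tendsto_const_nhds.add
          (tendsto_const_nhds.mul tendsto_one_div_add_atTop_nhds_zero_nat))
      simpa using h2
  have habs' : (fun j : ℕ => |poch g j * x ^ j / (j.factorial : ℝ)|)
      = fun j => poch g j * |x| ^ j / (j.factorial : ℝ) := by
    funext j
    rw [abs_div, abs_mul, abs_pow, abs_of_nonneg (poch_nonneg hgpos.le j), Nat.abs_cast]
  have hsgn : Summable fun j : ℕ => poch g j * x ^ j / (j.factorial : ℝ) :=
    Summable.of_abs (by rwa [habs'])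
  -- integral representation
  set f : ℕ → ℝ → ℝ := fun j u => (x ^ j / (j.factorial : ℝ)) *
    (Real.exp (-u) * u ^ (g + (j:ℝ) - 1)) with hfdef
  have hmeas : ∀ j : ℕ, Measurable (f j) := by intro j; fun_prop
  have hgj : ∀ j : ℕ, (0:ℝ) < g + (j:ℝ) := fun j => by positivity
  have hGint : ∀ j : ℕ, IntegrableOn
      (fun u : ℝ => Real.exp (-u) * u ^ (g + (j:ℝ) - 1)) (Ioi 0) := fun j =>
    Real.GammaIntegral_convergent (hgj j)
  have hint : ∀ j : ℕ, IntegrableOn (f j) (Ioi 0) := fun j => (hGint j).const_mul _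
  have hval : ∀ j : ℕ, ∫ u in Ioi (0:ℝ), f j u
      = Real.Gamma g * (poch g j * x ^ j / (j.factorial : ℝ)) := by
    intro j
    rw [hfdef]
    dsimp only
    rw [MeasureTheory.integral_const_mul, ← Real.Gamma_eq_integral (hgj j), Gamma_poch hgpos]
    ring
  have hlint : ∀ j : ℕ, (∫⁻ u in Ioi (0:ℝ), (‖f j u‖₊ : ℝ≥0∞))
      = ENNReal.ofReal (Real.Gamma g * (poch g j * |x| ^ j / (j.factorial : ℝ))) := by
    intro j
    have habsint : IntegrableOn
        (fun u : ℝ => |x| ^ j / (j.factorial : ℝ) * (Real.exp (-u) * u ^ (g + (j:ℝ) - 1)))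
        (Ioi 0) := (hGint j).const_mul _
    have hnn : 0 ≤ᵐ[volume.restrict (Ioi (0:ℝ))]
        fun u : ℝ => |x| ^ j / (j.factorial : ℝ) * (Real.exp (-u) * u ^ (g + (j:ℝ) - 1)) := by
      filter_upwards [ae_restrict_mem measurableSet_Ioi] with u hu
      have hu0 : (0:ℝ) < u := hu
      positivity
    have hOR := ofReal_integral_eq_lintegral_ofReal habsint hnn
    calc (∫⁻ u in Ioi (0:ℝ), (‖f j u‖₊ : ℝ≥0∞))
        = ∫⁻ u in Ioi (0:ℝ), ENNReal.ofReal
            (|x| ^ j / (j.factorial : ℝ) * (Real.exp (-u) * u ^ (g + (j:ℝ) - 1))) := by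
          refine setLIntegral_congr_fun measurableSet_Ioi
            (fun u hu => ?_)
          rw [← enorm_eq_nnnorm, Real.enorm_eq_ofReal_abs]
          congr 1
          rw [hfdef]
          dsimp only
          have hu0 : (0:ℝ) < u := hu
          rw [abs_mul, abs_div, abs_pow, Nat.abs_cast,
            abs_of_nonneg (by positivity : (0:ℝ) ≤ Real.exp (-u) * u ^ (g + (j:ℝ) - 1))]
      _ = ENNReal.ofReal (∫ u in Ioi (0:ℝ),
            |x| ^ j / (j.factorial : ℝ) * (Real.exp (-u) * u ^ (g + (j:ℝ) - 1))) := hOR.symm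
      _ = _ := by
          rw [MeasureTheory.integral_const_mul, ← Real.Gamma_eq_integral (hgj j), Gamma_poch hgpos]
          congr 1
          ring
  have hsum_lint : (∑' j : ℕ, ∫⁻ u in Ioi (0:ℝ), (‖f j u‖₊ : ℝ≥0∞)) ≠ ⊤ := by
    have hs2 : Summable fun j : ℕ =>
        Real.Gamma g * (poch g j * |x| ^ j / (j.factorial : ℝ)) := habs.mul_left _
    calc (∑' j : ℕ, ∫⁻ u in Ioi (0:ℝ), (‖f j u‖₊ : ℝ≥0∞))
        = ∑' j : ℕ, ENNReal.ofReal
            (Real.Gamma g * (poch g j * |x| ^ j / (j.factorial : ℝ))) := by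
          exact tsum_congr hlint
      _ = ENNReal.ofReal (∑' j : ℕ,
            Real.Gamma g * (poch g j * |x| ^ j / (j.factorial : ℝ))) := by
          refine (ENNReal.ofReal_tsum_of_nonneg (fun j => ?_) hs2).symm
          have h1 := poch_nonneg hgpos.le j
          have h3 := Nat.factorial_pos j
          have h4 := Real.Gamma_pos_of_pos hgpos
          positivity
      _ ≠ ⊤ := ENNReal.ofReal_ne_top
  have hswap := MeasureTheory.integral_tsum
    (fun j => (hmeas j).aestronglyMeasurable) hsum_lint
  -- pointwise evaluation of the inner sum
  have hptwise : ∀ u ∈ Ioi (0:ℝ),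
      (∑' j : ℕ, f j u) = u ^ (g - 1) * Real.exp (-((1 - x) * u)) := by
    intro u hu
    have hu0 : (0:ℝ) < u := hu
    have hterm : (fun j : ℕ => f j u)
        = fun j : ℕ => (Real.exp (-u) * u ^ (g - 1)) * ((x * u) ^ j / (j.factorial : ℝ)) := by
      funext j
      rw [hfdef]
      dsimp only
      rw [show g + (j:ℝ) - 1 = (g - 1) + (j:ℝ) by ring, Real.rpow_add hu0,
        Real.rpow_natCast, mul_pow]
      ring
    rw [hterm, tsum_mul_left, exp_tsum (x * u)]
    rw [show -((1 - x) * u) = -u + x * u by ring, Real.exp_add]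
    ring
  -- compute the integral of the pointwise sum
  have hIval : ∫ u in Ioi (0:ℝ), (∑' j : ℕ, f j u)
      = (1 / (1 - x)) ^ g * Real.Gamma g := by
    rw [setIntegral_congr_fun measurableSet_Ioi hptwise]
    exact integral_rpow_mul_exp_neg_mul_Ioi hgpos h1x
  -- combine
  have hkey : Real.Gamma g * (∑' j : ℕ, poch g j * x ^ j / (j.factorial : ℝ))
      = (1 / (1 - x)) ^ g * Real.Gamma g := by
    rw [← tsum_mul_left]
    rw [show (∑' j : ℕ, Real.Gamma g * (poch g j * x ^ j / (j.factorial : ℝ)))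
      = ∑' j : ℕ, ∫ u in Ioi (0:ℝ), f j u from tsum_congr fun j => (hval j).symm]
    rw [← hswap, hIval]
  have hGpos := Real.Gamma_pos_of_pos hgpos
  have htsum : (∑' j : ℕ, poch g j * x ^ j / (j.factorial : ℝ)) = (1 - x) ^ (-g) := by
    have h2 : (∑' j : ℕ, poch g j * x ^ j / (j.factorial : ℝ)) = (1 / (1 - x)) ^ g := by
      field_simp at hkey ⊢
      nlinarith [hkey]
    rw [h2, one_div, ← Real.rpow_neg_one (1-x), ← Real.rpow_mul h1x.le]
    ring_nf
  have := hsgn.hasSum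
  rwa [htsum] at this

/-- a.e.-strong measurability of a pointwise absolutely convergent series. -/
lemma aesm_tsum {f : ℕ → ℝ → ℝ} (hf : ∀ n, Measurable (f n)) {S : Set ℝ}
    (hS : MeasurableSet S) (habs : ∀ t ∈ S, Summable fun n => |f n t|) :
    AEStronglyMeasurable (fun t => ∑' n, f n t) (volume.restrict S) := by
  set G : ℝ → ℝ := fun t => (∑' n, ENNReal.ofReal (max (f n t) 0)).toReal with hG
  set H : ℝ → ℝ := fun t => (∑' n, ENNReal.ofReal (max (-(f n t)) 0)).toReal with hH
  have hmG : Measurable G :=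
    ENNReal.measurable_toReal.comp (Measurable.ennreal_tsum fun n =>
      ENNReal.measurable_ofReal.comp ((hf n).max measurable_const))
  have hmH : Measurable H :=
    ENNReal.measurable_toReal.comp (Measurable.ennreal_tsum fun n =>
      ENNReal.measurable_ofReal.comp ((hf n).neg.max measurable_const))
  have hEq : ∀ t ∈ S, (fun t => G t - H t) t = ∑' n, f n t := by
    intro t ht
    have hsums := habs t ht
    have hg : Summable fun n => max (f n t) 0 :=
      hsums.of_nonneg_of_le (fun n => le_max_right _ _)
        (fun n => max_le (le_abs_self _) (abs_nonneg _))
    have hh : Summable fun n => max (-(f n t)) 0 :=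
      hsums.of_nonneg_of_le (fun n => le_max_right _ _)
        (fun n => max_le (neg_le_abs _) (abs_nonneg _))
    have hGv : G t = ∑' n, max (f n t) 0 := by
      rw [hG]
      dsimp only
      rw [← ENNReal.ofReal_tsum_of_nonneg (fun n => le_max_right _ _) hg,
        ENNReal.toReal_ofReal (tsum_nonneg fun n => le_max_right _ _)]
    have hHv : H t = ∑' n, max (-(f n t)) 0 := by
      rw [hH]
      dsimp only
      rw [← ENNReal.ofReal_tsum_of_nonneg (fun n => le_max_right _ _) hh,
        ENNReal.toReal_ofReal (tsum_nonneg fun n => le_max_right _ _)]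
    dsimp only
    rw [hGv, hHv, ← Summable.tsum_sub hg hh]
    congr 1
    funext n
    rcases le_total (f n t) 0 with h | h
    · rw [max_eq_right h, max_eq_left (by linarith)]; ring
    · rw [max_eq_left h, max_eq_right (by linarith)]; ring
  refine ((hmG.sub hmH).aestronglyMeasurable).congr ?_
  rw [Filter.EventuallyEq, ae_restrict_iff' hS]
  exact Filter.Eventually.of_forall hEq

/-- Laplace transform of an absolutely convergent generalized power series:
pointwise summability and value of the integral. -/
lemma key1 {ι : Type*} [Countable ι] (c e : ι → ℝ) (he : ∀ n, 0 ≤ e n) {w : ℝ}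
    (hw : 0 < w)
    (hsum : Summable fun n => |c n| * Real.Gamma (e n + 1) * w ^ (-e n - 1)) :
    (∀ t > (0:ℝ), Summable fun n => |c n * t ^ e n|) ∧
    ∫ t in Ioi (0:ℝ), Real.exp (-(w * t)) * ∑' n, c n * t ^ e n
      = ∑' n, c n * Real.Gamma (e n + 1) * w ^ (-e n - 1) := by
  have hbound : ∀ t > (0:ℝ), ∀ n, |c n * t ^ e n|
      ≤ (Real.exp (w * t) * w) * (|c n| * Real.Gamma (e n + 1) * w ^ (-e n - 1)) := by
    intro t ht n
    have hwt : (0:ℝ) < w * t := by positivity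
    have h1 : (w * t) ^ e n ≤ Real.Gamma (e n + 1) * Real.exp (w * t) :=
      rpow_le_Gamma_mul_exp (he n) hwt
    have h2 : (w * t) ^ e n = w ^ e n * t ^ e n := Real.mul_rpow hw.le ht.le
    have h3 : (0:ℝ) < w ^ e n := Real.rpow_pos_of_pos hw _
    have h4 : t ^ e n ≤ Real.Gamma (e n + 1) * Real.exp (w * t) * (w ^ e n)⁻¹ := by
      calc t ^ e n = (w*t) ^ e n * (w ^ e n)⁻¹ := by rw [h2]; field_simp
        _ ≤ Real.Gamma (e n + 1) * Real.exp (w * t) * (w ^ e n)⁻¹ :=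
            mul_le_mul_of_nonneg_right h1 (by positivity)
    have h5 : w * w ^ (-e n - 1) = (w ^ e n)⁻¹ := by
      have h51 : w * w ^ (-e n - 1) = w ^ (1:ℝ) * w ^ (-e n - 1) := by rw [Real.rpow_one]
      rw [h51, ← Real.rpow_add hw, ← Real.rpow_neg hw.le]
      congr 1; ring
    rw [abs_mul, abs_of_nonneg (Real.rpow_nonneg ht.le _)]
    calc |c n| * t ^ e n
        ≤ |c n| * (Real.Gamma (e n + 1) * Real.exp (w * t) * (w ^ e n)⁻¹) :=
          mul_le_mul_of_nonneg_left h4 (abs_nonneg _)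
      _ = (Real.exp (w * t) * w) * (|c n| * Real.Gamma (e n + 1) * w ^ (-e n - 1)) := by
          rw [← h5]; ring
  have hpt : ∀ t > (0:ℝ), Summable fun n => |c n * t ^ e n| := by
    intro t ht
    exact (hsum.mul_left (Real.exp (w * t) * w)).of_nonneg_of_le
      (fun n => abs_nonneg _) (fun n => hbound t ht n)
  refine ⟨hpt, ?_⟩
  set F : ι → ℝ → ℝ := fun n t => Real.exp (-(w * t)) * (c n * t ^ e n) with hF
  have hmeas : ∀ n, Measurable (F n) := by intro n; fun_prop
  have hintF : ∀ n, IntegrableOn (F n) (Ioi 0) := by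
    intro n
    have h0 : IntegrableOn (fun t : ℝ => c n * (Real.exp (-(w * t)) * t ^ e n)) (Ioi 0) :=
      (laplace_integrable (he n) hw).const_mul (c n)
    exact IntegrableOn.congr_fun h0 (fun t ht => by simp only [hF]; ring) measurableSet_Ioi
  have hvalF : ∀ n, ∫ t in Ioi (0:ℝ), F n t
      = c n * Real.Gamma (e n + 1) * w ^ (-e n - 1) := by
    intro n
    have h1 : ∀ t ∈ Ioi (0:ℝ), F n t = c n * (Real.exp (-(w * t)) * t ^ e n) :=
      fun t _ => by simp only [hF]; ring
    rw [setIntegral_congr_fun measurableSet_Ioi h1, MeasureTheory.integral_const_mul,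
      laplace_rpow (he n) hw]
    ring
  have hlintF : ∀ n, (∫⁻ t in Ioi (0:ℝ), (‖F n t‖₊ : ℝ≥0∞))
      = ENNReal.ofReal (|c n| * Real.Gamma (e n + 1) * w ^ (-e n - 1)) := by
    intro n
    have habsint : IntegrableOn (fun t : ℝ => |c n| * (Real.exp (-(w * t)) * t ^ e n))
        (Ioi 0) := (laplace_integrable (he n) hw).const_mul _
    have hnn : 0 ≤ᵐ[volume.restrict (Ioi (0:ℝ))]
        fun t : ℝ => |c n| * (Real.exp (-(w * t)) * t ^ e n) := by
      filter_upwards [ae_restrict_mem measurableSet_Ioi] with t ht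
      have ht0 : (0:ℝ) < t := ht
      positivity
    have hOR := ofReal_integral_eq_lintegral_ofReal habsint hnn
    calc (∫⁻ t in Ioi (0:ℝ), (‖F n t‖₊ : ℝ≥0∞))
        = ∫⁻ t in Ioi (0:ℝ), ENNReal.ofReal
            (|c n| * (Real.exp (-(w * t)) * t ^ e n)) := by
          refine setLIntegral_congr_fun measurableSet_Ioi
            (fun t ht => ?_)
          have ht0 : (0:ℝ) < t := ht
          rw [← enorm_eq_nnnorm, Real.enorm_eq_ofReal_abs]
          congr 1
          simp only [hF]
          rw [abs_mul, abs_mul, abs_of_nonneg (Real.exp_pos _).le,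
            abs_of_nonneg (Real.rpow_nonneg ht0.le _)]
          ring
      _ = ENNReal.ofReal (∫ t in Ioi (0:ℝ),
            |c n| * (Real.exp (-(w * t)) * t ^ e n)) := hOR.symm
      _ = _ := by
          rw [MeasureTheory.integral_const_mul, laplace_rpow (he n) hw, ← mul_assoc]
  have hsum_lint : (∑' n, ∫⁻ t in Ioi (0:ℝ), (‖F n t‖₊ : ℝ≥0∞)) ≠ ⊤ := by
    rw [tsum_congr hlintF]
    rw [← ENNReal.ofReal_tsum_of_nonneg (fun n => ?_) hsum]
    · exact ENNReal.ofReal_ne_top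
    · have h1 : (0:ℝ) ≤ Real.Gamma (e n + 1) := Real.Gamma_nonneg_of_nonneg (by linarith [he n])
      have h2 : (0:ℝ) ≤ w ^ (-e n - 1) := (Real.rpow_pos_of_pos hw _).le
      positivity
  have hswap := MeasureTheory.integral_tsum
    (fun n => (hmeas n).aestronglyMeasurable) hsum_lint
  have hpteq : ∀ t : ℝ, (∑' n, F n t) = Real.exp (-(w * t)) * ∑' n, c n * t ^ e n :=
    fun t => tsum_mul_left
  calc ∫ t in Ioi (0:ℝ), Real.exp (-(w * t)) * ∑' n, c n * t ^ e n
      = ∫ t in Ioi (0:ℝ), ∑' n, F n t := by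
        refine setIntegral_congr_fun measurableSet_Ioi fun t _ => (hpteq t).symm
    _ = ∑' n, ∫ t in Ioi (0:ℝ), F n t := hswap
    _ = _ := tsum_congr hvalF

/-- Integrability of the Laplace integrand of the series, with room `w' < w`. -/
lemma key2 (c e : ℕ → ℝ) (he : ∀ n, 0 ≤ e n) {w w' : ℝ} (hw' : 0 < w') (hww : w' < w)
    (hsum : Summable fun n => |c n| * Real.Gamma (e n + 1) * w' ^ (-e n - 1)) :
    IntegrableOn (fun t => Real.exp (-(w * t)) * ∑' n, c n * t ^ e n) (Ioi 0) := by
  have hw : (0:ℝ) < w := lt_trans hw' hww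
  obtain ⟨hpt, -⟩ := key1 c e he hw' hsum
  have hbound : ∀ t > (0:ℝ), ∀ n, |c n * t ^ e n|
      ≤ (Real.exp (w' * t) * w') * (|c n| * Real.Gamma (e n + 1) * w' ^ (-e n - 1)) := by
    intro t ht n
    have hwt : (0:ℝ) < w' * t := by positivity
    have h1 : (w' * t) ^ e n ≤ Real.Gamma (e n + 1) * Real.exp (w' * t) :=
      rpow_le_Gamma_mul_exp (he n) hwt
    have h2 : (w' * t) ^ e n = w' ^ e n * t ^ e n := Real.mul_rpow hw'.le ht.le
    have h3 : (0:ℝ) < w' ^ e n := Real.rpow_pos_of_pos hw' _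
    have h4 : t ^ e n ≤ Real.Gamma (e n + 1) * Real.exp (w' * t) * (w' ^ e n)⁻¹ := by
      calc t ^ e n = (w'*t) ^ e n * (w' ^ e n)⁻¹ := by rw [h2]; field_simp
        _ ≤ Real.Gamma (e n + 1) * Real.exp (w' * t) * (w' ^ e n)⁻¹ :=
            mul_le_mul_of_nonneg_right h1 (by positivity)
    have h5 : w' * w' ^ (-e n - 1) = (w' ^ e n)⁻¹ := by
      have h51 : w' * w' ^ (-e n - 1) = w' ^ (1:ℝ) * w' ^ (-e n - 1) := by rw [Real.rpow_one]
      rw [h51, ← Real.rpow_add hw', ← Real.rpow_neg hw'.le]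
      congr 1; ring
    rw [abs_mul, abs_of_nonneg (Real.rpow_nonneg ht.le _)]
    calc |c n| * t ^ e n
        ≤ |c n| * (Real.Gamma (e n + 1) * Real.exp (w' * t) * (w' ^ e n)⁻¹) :=
          mul_le_mul_of_nonneg_left h4 (abs_nonneg _)
      _ = (Real.exp (w' * t) * w') * (|c n| * Real.Gamma (e n + 1) * w' ^ (-e n - 1)) := by
          rw [← h5]; ring
  set A : ℝ := ∑' n, |c n| * Real.Gamma (e n + 1) * w' ^ (-e n - 1) with hA
  have hA0 : 0 ≤ A := tsum_nonneg fun n => by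
    have h1 : (0:ℝ) ≤ Real.Gamma (e n + 1) := Real.Gamma_nonneg_of_nonneg (by linarith [he n])
    have h2 : (0:ℝ) ≤ w' ^ (-e n - 1) := (Real.rpow_pos_of_pos hw' _).le
    positivity
  have hmeasn : ∀ n, Measurable fun t : ℝ => c n * t ^ e n := by intro n; fun_prop
  have haesm : AEStronglyMeasurable (fun t => Real.exp (-(w * t)) * ∑' n, c n * t ^ e n)
      (volume.restrict (Ioi 0)) := by
    have h1 : Measurable fun t : ℝ => Real.exp (-(w * t)) := by fun_prop
    exact (h1.aestronglyMeasurable).mul (aesm_tsum hmeasn measurableSet_Ioi fun t ht => hpt t ht)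
  refine Integrable.mono' (g := fun t => (w' * A) * Real.exp (-(w - w') * t))
    ?_ haesm ?_
  · exact (exp_neg_integrableOn_Ioi 0 (by linarith : (0:ℝ) < w - w')).const_mul _
  · filter_upwards [ae_restrict_mem measurableSet_Ioi] with t ht
    have ht0 : (0:ℝ) < t := ht
    have h6 : |∑' n, c n * t ^ e n| ≤ ∑' n, |c n * t ^ e n| := by
      have := norm_tsum_le_tsum_norm (f := fun n => c n * t ^ e n)
        (by simpa only [Real.norm_eq_abs] using hpt t ht0)
      simpa only [Real.norm_eq_abs] using this
    have h7 : (∑' n, |c n * t ^ e n|) ≤ (Real.exp (w' * t) * w') * A := by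
      rw [hA, ← tsum_mul_left]
      exact Summable.tsum_le_tsum (fun n => hbound t ht0 n) (hpt t ht0)
        (hsum.mul_left _)
    rw [Real.norm_eq_abs, abs_mul, abs_of_nonneg (Real.exp_pos _).le]
    calc Real.exp (-(w*t)) * |∑' n, c n * t ^ e n|
        ≤ Real.exp (-(w*t)) * ((Real.exp (w' * t) * w') * A) := by
          refine mul_le_mul_of_nonneg_left (le_trans h6 h7) (Real.exp_pos _).le
      _ = (w' * A) * (Real.exp (-(w*t)) * Real.exp (w' * t)) := by ring
      _ = (w' * A) * Real.exp (-(w - w') * t) := by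
          rw [← Real.exp_add]; congr 1; ring

lemma pow_fold {v y L : ℝ} (hv : 0 < v) (hy : 0 < y) (s g : ℝ) (k : ℕ) :
    L ^ k * v ^ (-((k:ℝ) * s) - 1) * y ^ (-((k:ℝ) * g))
      = v⁻¹ * (L * (v ^ s * y ^ g)⁻¹) ^ k := by
  have h1 : v ^ (-((k:ℝ) * s) - 1) = ((v ^ s) ^ k)⁻¹ * v⁻¹ := by
    have e1 : ((v ^ s) ^ k)⁻¹ = v ^ (-(s * (k:ℝ))) := by
      rw [← Real.rpow_natCast (v ^ s) k, ← Real.rpow_mul hv.le, ← Real.rpow_neg hv.le]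
    have e2 : (v:ℝ)⁻¹ = v ^ (-1:ℝ) := (Real.rpow_neg_one v).symm
    rw [e1, e2, ← Real.rpow_add hv]
    congr 1; push_cast; ring
  have h2 : y ^ (-((k:ℝ) * g)) = ((y ^ g) ^ k)⁻¹ := by
    rw [← Real.rpow_natCast (y ^ g) k, ← Real.rpow_mul hy.le, ← Real.rpow_neg hy.le]
    congr 1; ring
  rw [h1, h2, mul_pow, mul_inv, mul_pow, inv_pow, inv_pow]
  ring


theorem stmt3 (α ρ β γ lam mu : ℝ) (hα : 0 < α) (hα1 : α ≤ 1) (hρ : 0 < ρ) (hρ1 : ρ ≤ 1)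
    (hβ : 0 < β) (hγ : 0 ≤ γ) (hlam : 0 < lam) (hmu : 0 < mu) :
    ∀ w > (0 : ℝ), β < w ^ α → |lam - mu| < w ^ ρ * (1 - β * w ^ (-α)) ^ γ →
      (∀ t ≥ (0 : ℝ), Summable fun k : ℕ => |meanTerm α ρ β γ lam mu k t|) ∧
      (∀ k : ℕ, IntegrableOn
        (fun t => Real.exp (-w * t) * meanTerm α ρ β γ lam mu k t) (Set.Ioi 0)) ∧
      ∫ t in Set.Ioi (0 : ℝ), Real.exp (-w * t) * ∑' k : ℕ, meanTerm α ρ β γ lam mu k t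
        = w ^ (ρ - 1) * (1 + β * w ^ (-α)) ^ γ
            / (w ^ ρ * (1 + β * w ^ (-α)) ^ γ - (lam - mu)) := by
  intro w hw hβα hq
  have hwα : (0:ℝ) < w ^ α := Real.rpow_pos_of_pos hw α
  have hwρ : (0:ℝ) < w ^ ρ := Real.rpow_pos_of_pos hw ρ
  set x : ℝ := β * w ^ (-α) with hxdef
  have hwnegα : (0:ℝ) < w ^ (-α) := Real.rpow_pos_of_pos hw _
  have hx0 : 0 < x := by rw [hxdef]; positivity
  have hx1 : x < 1 := by
    rw [hxdef, Real.rpow_neg hw.le, ← div_eq_mul_inv, div_lt_one hwα]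
    exact hβα
  have h1x : (0:ℝ) < 1 - x := by linarith
  have h1px : (0:ℝ) < 1 + x := by linarith
  have h1xγ : (0:ℝ) < (1 - x) ^ γ := Real.rpow_pos_of_pos h1x γ
  have h1pxγ : (0:ℝ) < (1 + x) ^ γ := Real.rpow_pos_of_pos h1px γ
  -- the coefficient and exponent functions
  set c : ℕ × ℕ → ℝ := fun p => (lam - mu) ^ p.1 * poch ((p.1 : ℝ) * γ) p.2 * (-β) ^ p.2
    / (Real.Gamma ((p.2 : ℝ) * α + ((p.1 : ℝ) * ρ + 1)) * (p.2.factorial : ℝ)) with hcdef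
  set e : ℕ × ℕ → ℝ := fun p => (p.1 : ℝ) * ρ + (p.2 : ℝ) * α with hedef
  have he : ∀ p : ℕ × ℕ, 0 ≤ e p := by
    rintro ⟨k, j⟩
    simp only [hedef]
    positivity
  have hΓpos : ∀ p : ℕ × ℕ, 0 < Real.Gamma (e p + 1) := by
    rintro ⟨k, j⟩
    refine Real.Gamma_pos_of_pos ?_
    simp only [hedef]
    positivity
  -- master algebraic identity for |c| * Γ * v^(-e-1)
  have hcv : ∀ (k j : ℕ) (v : ℝ), 0 < v →
      |c (k, j)| * Real.Gamma (e (k, j) + 1) * v ^ (-e (k, j) - 1)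
        = (|lam - mu| ^ k * v ^ (-((k:ℝ) * ρ) - 1)) *
          (poch ((k:ℝ) * γ) j * (β * v ^ (-α)) ^ j / (j.factorial : ℝ)) := by
    intro k j v hv
    have hG0 : (0:ℝ) < Real.Gamma ((j:ℝ) * α + ((k:ℝ) * ρ + 1)) :=
      Real.Gamma_pos_of_pos (by positivity)
    have hfj : (0:ℝ) < (j.factorial : ℝ) := by exact_mod_cast Nat.factorial_pos j
    have hΓ : Real.Gamma (e (k, j) + 1) = Real.Gamma ((j:ℝ) * α + ((k:ℝ) * ρ + 1)) := by
      congr 1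
      simp only [hedef]
      ring
    have hvneg : (0:ℝ) < v ^ (-α) := Real.rpow_pos_of_pos hv _
    have hvsplit : v ^ (-e (k, j) - 1) = v ^ (-((k:ℝ) * ρ) - 1) * (v ^ (-α)) ^ j := by
      have e1 : ((v ^ (-α)) ^ j : ℝ) = v ^ (-α * (j:ℝ)) := by
        rw [← Real.rpow_natCast (v ^ (-α)) j, ← Real.rpow_mul hv.le]
      rw [e1, ← Real.rpow_add hv]
      congr 1
      simp only [hedef]
      ring
    have habsc : |c (k, j)| = |lam - mu| ^ k * poch ((k:ℝ) * γ) j * β ^ j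
        / (Real.Gamma ((j:ℝ) * α + ((k:ℝ) * ρ + 1)) * (j.factorial : ℝ)) := by
      simp only [hcdef]
      rw [abs_div, abs_mul, abs_mul, abs_pow, abs_pow, abs_neg,
        abs_of_pos hβ, abs_mul, abs_of_pos hG0, abs_of_pos hfj,
        abs_of_nonneg (poch_nonneg (by positivity) j)]
    rw [habsc, hΓ, hvsplit, mul_pow]
    field_simp
  -- signed version
  have hcvs : ∀ (k j : ℕ) (v : ℝ), 0 < v →
      c (k, j) * Real.Gamma (e (k, j) + 1) * v ^ (-e (k, j) - 1)
        = ((lam - mu) ^ k * v ^ (-((k:ℝ) * ρ) - 1)) *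
          (poch ((k:ℝ) * γ) j * (-(β * v ^ (-α))) ^ j / (j.factorial : ℝ)) := by
    intro k j v hv
    have hG0 : (0:ℝ) < Real.Gamma ((j:ℝ) * α + ((k:ℝ) * ρ + 1)) :=
      Real.Gamma_pos_of_pos (by positivity)
    have hfj : (0:ℝ) < (j.factorial : ℝ) := by exact_mod_cast Nat.factorial_pos j
    have hΓ : Real.Gamma (e (k, j) + 1) = Real.Gamma ((j:ℝ) * α + ((k:ℝ) * ρ + 1)) := by
      congr 1
      simp only [hedef]
      ring
    have hvsplit : v ^ (-e (k, j) - 1) = v ^ (-((k:ℝ) * ρ) - 1) * (v ^ (-α)) ^ j := by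
      have e1 : ((v ^ (-α)) ^ j : ℝ) = v ^ (-α * (j:ℝ)) := by
        rw [← Real.rpow_natCast (v ^ (-α)) j, ← Real.rpow_mul hv.le]
      rw [e1, ← Real.rpow_add hv]
      congr 1
      simp only [hedef]
      ring
    have hnegpow : (-(β * v ^ (-α))) ^ j = (-β) ^ j * (v ^ (-α)) ^ j := by
      rw [show -(β * v ^ (-α)) = (-β) * v ^ (-α) by ring, mul_pow]
    simp only [hcdef]
    rw [hΓ, hvsplit, hnegpow]
    field_simp
  -- |x| < 1 facts
  have hxabs : |x| < 1 := by rw [abs_of_pos hx0]; exact hx1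
  have hkγnn : ∀ k : ℕ, (0:ℝ) ≤ (k:ℝ) * γ := fun k => by positivity
  -- summability of the master series over ℕ × ℕ
  set q : ℝ := |lam - mu| * (w ^ ρ * (1 - x) ^ γ)⁻¹ with hqdef
  have hq0 : 0 ≤ q := by rw [hqdef]; positivity
  have hq1 : q < 1 := by
    rw [hqdef, ← div_eq_mul_inv, div_lt_one (by positivity)]
    exact hq
  have hnn : ∀ p : ℕ × ℕ, 0 ≤ |c p| * Real.Gamma (e p + 1) * w ^ (-e p - 1) :=
    fun p => mul_nonneg (mul_nonneg (abs_nonneg _) (hΓpos p).le)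
      (Real.rpow_pos_of_pos hw _).le
  have hinner_abs : ∀ k : ℕ, (fun j : ℕ => |c (k, j)| * Real.Gamma (e (k, j) + 1)
        * w ^ (-e (k, j) - 1))
      = fun j : ℕ => (|lam - mu| ^ k * w ^ (-((k:ℝ) * ρ) - 1)) *
          (poch ((k:ℝ) * γ) j * x ^ j / (j.factorial : ℝ)) :=
    fun k => funext fun j => hcv k j w hw
  have hsum_inner : ∀ k : ℕ, Summable fun j : ℕ =>
      |c (k, j)| * Real.Gamma (e (k, j) + 1) * w ^ (-e (k, j) - 1) := by
    intro k
    rw [hinner_abs k]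
    exact ((hasSum_poch (hkγnn k) hxabs).summable).mul_left _
  have hinner_val : ∀ k : ℕ, (∑' j : ℕ, |c (k, j)| * Real.Gamma (e (k, j) + 1)
        * w ^ (-e (k, j) - 1)) = w⁻¹ * q ^ k := by
    intro k
    rw [hinner_abs k, tsum_mul_left, (hasSum_poch (hkγnn k) hxabs).tsum_eq, hqdef]
    exact pow_fold hw h1x ρ γ k
  have habs_prod : Summable fun p : ℕ × ℕ =>
      |c p| * Real.Gamma (e p + 1) * w ^ (-e p - 1) := by
    refine (summable_prod_of_nonneg hnn).2 ⟨hsum_inner, ?_⟩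
    have : (fun k : ℕ => ∑' j : ℕ, |c (k, j)| * Real.Gamma (e (k, j) + 1)
        * w ^ (-e (k, j) - 1)) = fun k => w⁻¹ * q ^ k := funext hinner_val
    rw [this]
    exact (summable_geometric_of_lt_one hq0 hq1).mul_left _
  obtain ⟨hpt, hval⟩ := key1 c e he hw habs_prod
  -- meanTerm as a series
  have hmean : ∀ (k : ℕ) (t : ℝ), 0 < t →
      meanTerm α ρ β γ lam mu k t = ∑' j : ℕ, c (k, j) * t ^ e (k, j) := by
    intro k t ht
    rw [meanTerm, ml3, ← tsum_mul_left]
    refine tsum_congr fun j => ?_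
    have hG0 : (0:ℝ) < Real.Gamma ((j:ℝ) * α + ((k:ℝ) * ρ + 1)) :=
      Real.Gamma_pos_of_pos (by positivity)
    have hfj : (0:ℝ) < (j.factorial : ℝ) := by exact_mod_cast Nat.factorial_pos j
    have h1 : (-β * t ^ α) ^ j = (-β) ^ j * (t ^ α) ^ j := mul_pow _ _ _
    have h2 : ((t ^ α) ^ j : ℝ) = t ^ (α * (j:ℝ)) := by
      rw [← Real.rpow_natCast (t ^ α) j, ← Real.rpow_mul ht.le]
    have h3 : t ^ ((k:ℝ) * ρ) * t ^ (α * (j:ℝ)) = t ^ e (k, j) := by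
      rw [← Real.rpow_add ht]
      congr 1
      simp only [hedef]
      ring
    simp only [hcdef]
    rw [h1, h2, ← h3]
    field_simp
  refine ⟨?_, ?_, ?_⟩
  · -- claim 1 : pointwise absolute summability
    intro t ht
    rcases eq_or_lt_of_le ht with h0 | hpos
    · -- t = 0
      refine summable_of_ne_finset_zero (s := {0}) fun k hk => ?_
      have hk0 : k ≠ 0 := by simpa using hk
      have hkρ : ((k:ℝ) * ρ) ≠ 0 := by
        have : (0:ℝ) < (k:ℝ) := by exact_mod_cast Nat.pos_of_ne_zero hk0
        positivity
      rw [meanTerm, ← h0, Real.zero_rpow hkρ]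
      simp
    · -- t > 0
      have hptt := hpt t hpos
      have hfib : ∀ k : ℕ, Summable fun j : ℕ => |c (k, j) * t ^ e (k, j)| :=
        fun k => hptt.prod_factor k
      have hG : Summable fun k : ℕ => ∑' j : ℕ, |c (k, j) * t ^ e (k, j)| :=
        (hptt.hasSum.prod_fiberwise fun k => (hfib k).hasSum).summable
      refine hG.of_nonneg_of_le (fun k => abs_nonneg _) fun k => ?_
      rw [hmean k t hpos]
      have := norm_tsum_le_tsum_norm (f := fun j : ℕ => c (k, j) * t ^ e (k, j))
        (by simpa only [Real.norm_eq_abs] using hfib k)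
      simpa only [Real.norm_eq_abs] using this
  · -- claim 2 : integrability of each term
    intro k
    set w' : ℝ := ((β + w ^ α) / 2) ^ (α⁻¹ : ℝ) with hw'def
    have hbase : (0:ℝ) < (β + w ^ α) / 2 := by positivity
    have hw'0 : 0 < w' := Real.rpow_pos_of_pos hbase _
    have hw'α : w' ^ α = (β + w ^ α) / 2 := by
      rw [hw'def, ← Real.rpow_mul hbase.le, inv_mul_cancel₀ hα.ne', Real.rpow_one]
    have hβ' : β < w' ^ α := by rw [hw'α]; linarith
    have hw'w : w' < w := by
      by_contra hcon
      push_neg at hcon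
      have : w ^ α ≤ w' ^ α := Real.rpow_le_rpow hw.le hcon hα.le
      rw [hw'α] at this
      linarith
    have hw'negα : (0:ℝ) < w' ^ (-α) := Real.rpow_pos_of_pos hw'0 _
    have hx'0 : 0 < β * w' ^ (-α) := by positivity
    have hx'1 : β * w' ^ (-α) < 1 := by
      rw [Real.rpow_neg hw'0.le, ← div_eq_mul_inv, div_lt_one (Real.rpow_pos_of_pos hw'0 α)]
      exact hβ'
    have hx'abs : |β * w' ^ (-α)| < 1 := by rw [abs_of_pos hx'0]; exact hx'1
    have hsum' : Summable fun j : ℕ =>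
        |c (k, j)| * Real.Gamma (e (k, j) + 1) * w' ^ (-e (k, j) - 1) := by
      have : (fun j : ℕ => |c (k, j)| * Real.Gamma (e (k, j) + 1) * w' ^ (-e (k, j) - 1))
          = fun j : ℕ => (|lam - mu| ^ k * w' ^ (-((k:ℝ) * ρ) - 1)) *
            (poch ((k:ℝ) * γ) j * (β * w' ^ (-α)) ^ j / (j.factorial : ℝ)) :=
        funext fun j => hcv k j w' hw'0
      rw [this]
      exact ((hasSum_poch (hkγnn k) hx'abs).summable).mul_left _
    have hint := key2 (fun j => c (k, j)) (fun j => e (k, j)) (fun j => he (k, j))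
      hw'0 hw'w hsum'
    refine IntegrableOn.congr_fun hint (fun t ht => ?_) measurableSet_Ioi
    have ht0 : (0:ℝ) < t := ht
    rw [neg_mul, hmean k t ht0]
  · -- claim 3 : value of the integral
    have hsgn_abs : (fun p : ℕ × ℕ => |c p * Real.Gamma (e p + 1) * w ^ (-e p - 1)|)
        = fun p => |c p| * Real.Gamma (e p + 1) * w ^ (-e p - 1) := by
      funext p
      rw [abs_mul, abs_mul, abs_of_pos (hΓpos p),
        abs_of_pos (Real.rpow_pos_of_pos hw _)]
    have hsgn_prod : Summable fun p : ℕ × ℕ =>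
        c p * Real.Gamma (e p + 1) * w ^ (-e p - 1) :=
      Summable.of_abs (by rw [hsgn_abs]; exact habs_prod)
    set r : ℝ := (lam - mu) * (w ^ ρ * (1 + x) ^ γ)⁻¹ with hrdef
    have hr1 : |r| < 1 := by
      have hmono : (1 - x) ^ γ ≤ (1 + x) ^ γ :=
        Real.rpow_le_rpow h1x.le (by linarith) hγ
      have h2 : |r| = |lam - mu| * (w ^ ρ * (1 + x) ^ γ)⁻¹ := by
        rw [hrdef, abs_mul, abs_of_pos (by positivity : (0:ℝ) < (w ^ ρ * (1 + x) ^ γ)⁻¹)]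
      have h3 : (w ^ ρ * (1 + x) ^ γ)⁻¹ ≤ (w ^ ρ * (1 - x) ^ γ)⁻¹ := by
        apply inv_anti₀ (by positivity)
        exact mul_le_mul_of_nonneg_left hmono hwρ.le
      calc |r| = |lam - mu| * (w ^ ρ * (1 + x) ^ γ)⁻¹ := h2
        _ ≤ |lam - mu| * (w ^ ρ * (1 - x) ^ γ)⁻¹ :=
            mul_le_mul_of_nonneg_left h3 (abs_nonneg _)
        _ = q := by rw [hqdef]
        _ < 1 := hq1
    have hinner_sgn : ∀ k : ℕ, (∑' j : ℕ, c (k, j) * Real.Gamma (e (k, j) + 1)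
          * w ^ (-e (k, j) - 1)) = w⁻¹ * r ^ k := by
      intro k
      have h1 : (fun j : ℕ => c (k, j) * Real.Gamma (e (k, j) + 1) * w ^ (-e (k, j) - 1))
          = fun j : ℕ => ((lam - mu) ^ k * w ^ (-((k:ℝ) * ρ) - 1)) *
            (poch ((k:ℝ) * γ) j * (-x) ^ j / (j.factorial : ℝ)) := by
        refine funext fun j => ?_
        rw [hcvs k j w hw]
      have hnegx : |(-x : ℝ)| < 1 := by rwa [abs_neg]
      rw [h1, tsum_mul_left, (hasSum_poch (hkγnn k) hnegx).tsum_eq, sub_neg_eq_add, hrdef]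
      exact pow_fold hw h1px ρ γ k
    have hstep1 : ∫ t in Ioi (0:ℝ), Real.exp (-w * t) * ∑' k : ℕ, meanTerm α ρ β γ lam mu k t
        = ∫ t in Ioi (0:ℝ), Real.exp (-(w * t)) * ∑' p : ℕ × ℕ, c p * t ^ e p := by
      refine setIntegral_congr_fun measurableSet_Ioi fun t ht => ?_
      have ht0 : (0:ℝ) < t := ht
      have hsp : Summable fun p : ℕ × ℕ => c p * t ^ e p := (hpt t ht0).of_abs
      rw [neg_mul]
      congr 1
      rw [tsum_congr fun k => hmean k t ht0]
      exact (Summable.tsum_prod' hsp fun k => hsp.prod_factor k).symm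
    have hfinal : (∑' p : ℕ × ℕ, c p * Real.Gamma (e p + 1) * w ^ (-e p - 1))
        = w⁻¹ * (1 - r)⁻¹ := by
      rw [Summable.tsum_prod' hsgn_prod fun k => hsgn_prod.prod_factor k]
      rw [tsum_congr hinner_sgn, tsum_mul_left, tsum_geometric_of_norm_lt_one (by rwa [Real.norm_eq_abs])]
    have hD : 0 < w ^ ρ * (1 + x) ^ γ - (lam - mu) := by
      have hmono : (1 - x) ^ γ ≤ (1 + x) ^ γ :=
        Real.rpow_le_rpow h1x.le (by linarith) hγ
      have h2 : |lam - mu| < w ^ ρ * (1 + x) ^ γ :=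
        lt_of_lt_of_le hq (mul_le_mul_of_nonneg_left hmono hwρ.le)
      have := le_abs_self (lam - mu)
      linarith
    have hwρ1 : w ^ (ρ - 1) = w ^ ρ / w := by
      rw [Real.rpow_sub hw, Real.rpow_one]
    rw [hstep1, hval, hfinal, hwρ1]
    have h1r : 1 - r = (w ^ ρ * (1 + x) ^ γ - (lam - mu)) * (w ^ ρ * (1 + x) ^ γ)⁻¹ := by
      rw [hrdef]
      field_simp
    rw [h1r]
    field_simp
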